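/- Let H be a real m × n matrix whose kernel is exactly the span of the all-ones vector 𝟙, and let i be a row index. Suppose θ* minimizes card(Hθ) over all θ ∈ ℝⁿ with (Hθ)_i = 1. Then I* := supp(Hθ*) satisfies: (a) i ∈ I*; (b) rank(H(Ī*, j̄₀)) < n − 1 for every column index j₀; (c) no strictly proper subset I' ⊊ I* satisfies rank(H(Ī', j̄₀)) < n − 1; and (d) card(I*) is minimal among all sets with properties (a)–(c), i.e., I* is a minimum-cardinality critical tuple containing measurement i. -/

import Mathlib

open Matrix

/-- The support of the residual vector `Hθ`: the set of measurements with nonzero value. -/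
noncomputable def resid {m n : ℕ} (H : Matrix (Fin m) (Fin n) ℝ) (θ : Fin n → ℝ) :
    Finset (Fin m) := Finset.univ.filter fun j => H.mulVec θ j ≠ 0

/-- The submatrix `H(Ī, j̄₀)` of `H`: rows in the complement of `I`, all columns except `j₀`. -/
def subm {m n : ℕ} (H : Matrix (Fin m) (Fin n) ℝ) (I : Finset (Fin m)) (j₀ : Fin n) :
    Matrix {j : Fin m // j ∉ I} {l : Fin n // l ≠ j₀} ℝ := fun r c => H r.1 c.1

/-- Removing the measurements in `I` renders the network unobservable:
`rank (H(Ī, j̄₀)) < n - 1` for some reference column `j₀`. -/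
noncomputable def Deficient {m n : ℕ} (H : Matrix (Fin m) (Fin n) ℝ)
    (I : Finset (Fin m)) : Prop := ∃ j₀ : Fin n, (subm H I j₀).rank < n - 1

lemma aux_card {n : ℕ} (j₀ : Fin n) : Fintype.card {l : Fin n // l ≠ j₀} = n - 1 := by
  simp [Fintype.card_subtype_compl]

lemma aux_sum {n : ℕ} (j₀ : Fin n) (F : Fin n → ℝ) (h : F j₀ = 0) :
    ∑ c : {l : Fin n // l ≠ j₀}, F c.1 = ∑ l, F l := by
  rw [← Finset.sum_subtype ({j₀}ᶜ : Finset (Fin n)) (by simp) F]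
  rw [← Finset.sum_compl_add_sum {j₀} F]
  simp [h]

lemma rank_nullity {m n : ℕ} (H : Matrix (Fin m) (Fin n) ℝ) (I : Finset (Fin m))
    (j₀ : Fin n) :
    (subm H I j₀).rank
      + Module.finrank ℝ (LinearMap.ker (subm H I j₀).mulVecLin) = n - 1 := by
  rw [Matrix.rank, LinearMap.finrank_range_add_finrank_ker]
  simp [aux_card j₀]

/-- From a nontrivial residual supported in `I`, rank deficiency for every `j₀`. -/
lemma vecToDef {m n : ℕ} (H : Matrix (Fin m) (Fin n) ℝ)
    (hone : ∀ c : ℝ, H.mulVec (fun _ => c) = 0) (I : Finset (Fin m)) (θ : Fin n → ℝ)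
    (hne : H.mulVec θ ≠ 0) (hsupp : resid H θ ⊆ I) (j₀ : Fin n) :
    (subm H I j₀).rank < n - 1 := by
  set θ' : Fin n → ℝ := θ - (fun _ => θ j₀) with hθ'
  have hmul : H.mulVec θ' = H.mulVec θ := by
    rw [hθ', Matrix.mulVec_sub, hone (θ j₀), sub_zero]
  have hj₀ : θ' j₀ = 0 := by simp [hθ']
  set v : {l : Fin n // l ≠ j₀} → ℝ := fun c => θ' c.1 with hv
  have hker : (subm H I j₀).mulVec v = 0 := by
    funext r
    have : ∀ l, H r.1 l * θ' l = (fun l => H r.1 l * θ' l) l := fun _ => rfl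
    have hs : ∑ c : {l : Fin n // l ≠ j₀}, H r.1 c.1 * θ' c.1
        = ∑ l, H r.1 l * θ' l := aux_sum j₀ (fun l => H r.1 l * θ' l) (by simp only [hj₀, mul_zero])
    have hr : H.mulVec θ r.1 = 0 := by
      by_contra hc
      exact r.2 (hsupp (by simp [resid, hc]))
    simp only [Matrix.mulVec, dotProduct, subm, Pi.zero_apply]
    rw [hs]
    rw [show ∑ l, H r.1 l * θ' l = H.mulVec θ' r.1 from rfl, hmul, hr]
  have hvne : v ≠ 0 := by
    intro h0
    apply hne
    rw [← hmul]
    have : θ' = 0 := by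
      funext l
      by_cases hl : l = j₀
      · simp [hl, hj₀]
      · exact congrFun h0 ⟨l, hl⟩
    rw [this, Matrix.mulVec_zero]
  have hker' : v ∈ LinearMap.ker (subm H I j₀).mulVecLin := by
    simpa [Matrix.mulVecLin] using hker
  have hnt : Nontrivial (LinearMap.ker (subm H I j₀).mulVecLin) :=
    Submodule.nontrivial_iff_ne_bot.mpr
      (Submodule.ne_bot_iff _ |>.mpr ⟨v, hker', hvne⟩)
  have hpos : 0 < Module.finrank ℝ (LinearMap.ker (subm H I j₀).mulVecLin) :=
    Module.finrank_pos_iff.mpr hnt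
  have := rank_nullity H I j₀
  omega

/-- From rank deficiency at some `j₀`, a nontrivial residual supported in `I`. -/
lemma defToVec {m n : ℕ} (H : Matrix (Fin m) (Fin n) ℝ)
    (hobs : ∀ θ : Fin n → ℝ, H.mulVec θ = 0 ↔ ∃ c : ℝ, θ = fun _ => c)
    (I : Finset (Fin m)) (j₀ : Fin n) (h : (subm H I j₀).rank < n - 1) :
    ∃ θ : Fin n → ℝ, H.mulVec θ ≠ 0 ∧ resid H θ ⊆ I := by
  have hrn := rank_nullity H I j₀
  have hpos : 0 < Module.finrank ℝ (LinearMap.ker (subm H I j₀).mulVecLin) := by omega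
  have hnb : LinearMap.ker (subm H I j₀).mulVecLin ≠ ⊥ := by
    intro hb; rw [hb, finrank_bot] at hpos; exact absurd hpos (lt_irrefl 0)
  obtain ⟨v, hvker, hvne'⟩ := Submodule.exists_mem_ne_zero_of_ne_bot hnb
  have hvker' : (subm H I j₀).mulVec v = 0 := hvker
  set θ : Fin n → ℝ := fun l => if hl : l = j₀ then 0 else v ⟨l, hl⟩ with hθ
  have hθj₀ : θ j₀ = 0 := by simp [hθ]
  have hsupp : resid H θ ⊆ I := by
    intro j hj
    by_contra hjI
    have : H.mulVec θ j = 0 := by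
      have hs : ∑ c : {l : Fin n // l ≠ j₀}, H j c.1 * θ c.1
          = ∑ l, H j l * θ l := aux_sum j₀ (fun l => H j l * θ l) (by simp only [hθj₀, mul_zero])
      have h2 : ∀ c : {l : Fin n // l ≠ j₀}, θ c.1 = v c := by
        intro c; simp [hθ, c.2]
      have := congrFun hvker' ⟨j, hjI⟩
      simp only [Matrix.mulVec, dotProduct, subm, Pi.zero_apply] at this ⊢
      rw [← hs]
      rw [Finset.sum_congr rfl (fun c _ => by rw [h2 c])]
      exact this
    simp [resid, this] at hj
  refine ⟨θ, ?_, hsupp⟩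
  intro h0
  obtain ⟨c, hc⟩ := (hobs θ).mp h0
  have hc0 : c = 0 := by rw [← hθj₀, hc]
  apply hvne'
  funext l
  have := congrFun hc l.1
  simp [hθ, l.2, hc0] at this
  simp [this]

/-- For an observable network, if `θ*` minimizes `card (Hθ)` subject to
`(Hθ)_i = 1`, then `I* := supp (Hθ*)` (a) contains `i`, (b) satisfies
`rank (H(Ī*, j̄₀)) < n - 1` for every reference column `j₀`, (c) has no strictly proper
subset satisfying the rank-deficiency condition, and (d) has minimum cardinality among
all sets with properties (a)–(c). -/
theorem stmt4 (m n : ℕ) (H : Matrix (Fin m) (Fin n) ℝ)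
    (hobs : ∀ θ : Fin n → ℝ, H.mulVec θ = 0 ↔ ∃ c : ℝ, θ = fun _ => c)
    (i : Fin m) (θs : Fin n → ℝ)
    (hfeas : H.mulVec θs i = 1)
    (hopt : ∀ θ : Fin n → ℝ, H.mulVec θ i = 1 → (resid H θs).card ≤ (resid H θ).card) :
    i ∈ resid H θs ∧
    (∀ j₀ : Fin n, (subm H (resid H θs) j₀).rank < n - 1) ∧
    (∀ I' ⊂ resid H θs, ¬ Deficient H I') ∧
    (∀ J : Finset (Fin m), i ∈ J →
      (∀ j₀ : Fin n, (subm H J j₀).rank < n - 1) →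
      (∀ J' ⊂ J, ¬ Deficient H J') →
      (resid H θs).card ≤ J.card) := by
  have hone : ∀ c : ℝ, H.mulVec (fun _ => c) = 0 := fun c => (hobs _).mpr ⟨c, rfl⟩
  have hθsne : H.mulVec θs ≠ 0 := fun h0 => by
    rw [h0] at hfeas; simp at hfeas
  have hi : i ∈ resid H θs := by simp [resid, hfeas]
  -- key: given θ with nontrivial residual supported in J ⊇ things, compare cards
  refine ⟨hi, fun j₀ => vecToDef H hone _ θs hθsne (fun x hx => hx) j₀, ?_, ?_⟩
  · -- (c)
    rintro I' hsub ⟨j₀, hdef⟩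
    obtain ⟨θ, hθne, hθsupp⟩ := defToVec H hobs I' j₀ hdef
    by_cases hθi : H.mulVec θ i = 0
    · -- kill one coordinate of θs using θ
      obtain ⟨j, hj⟩ : ∃ j, H.mulVec θ j ≠ 0 := Function.ne_iff.mp hθne
      have hjr : j ∈ resid H θ := by simp [resid, hj]
      set t : ℝ := -(H.mulVec θs j) / (H.mulVec θ j) with ht
      set θ₂ : Fin n → ℝ := θs + t • θ with hθ₂
      have hmul2 : H.mulVec θ₂ = H.mulVec θs + t • H.mulVec θ := by
        rw [hθ₂, Matrix.mulVec_add, Matrix.mulVec_smul]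
      have hfeas2 : H.mulVec θ₂ i = 1 := by
        rw [hmul2]; simp [hθi, hfeas]
      have hj2 : H.mulVec θ₂ j = 0 := by
        rw [hmul2]; simp [ht]; field_simp; ring
      have hjs : j ∈ resid H θs := hsub.subset (hθsupp hjr)
      have hsub2 : resid H θ₂ ⊆ (resid H θs).erase j := by
        intro k hk
        simp only [resid, Finset.mem_filter, Finset.mem_univ, true_and] at hk
        rcases eq_or_ne k j with rfl | hkj
        · exact absurd hj2 hk
        · refine Finset.mem_erase.mpr ⟨hkj, ?_⟩
          simp only [resid, Finset.mem_filter, Finset.mem_univ, true_and]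
          intro hks
          apply hk
          rw [hmul2]
          have : H.mulVec θ k = 0 := by
            by_contra hc
            have : k ∈ resid H θs := hsub.subset (hθsupp (by simp [resid, hc]))
            simp [resid, hks] at this
          simp [hks, this]
      have := hopt θ₂ hfeas2
      have hlt : (resid H θ₂).card < (resid H θs).card :=
        lt_of_le_of_lt (Finset.card_le_card hsub2)
          (by rw [Finset.card_erase_of_mem hjs]; exact Nat.sub_lt (Finset.card_pos.mpr ⟨j, hjs⟩) one_pos)
      omega
    · -- scale θ
      set θ₂ : Fin n → ℝ := (H.mulVec θ i)⁻¹ • θ with hθ₂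
      have hmul2 : H.mulVec θ₂ = (H.mulVec θ i)⁻¹ • H.mulVec θ := by
        rw [hθ₂, Matrix.mulVec_smul]
      have hfeas2 : H.mulVec θ₂ i = 1 := by
        rw [hmul2]; simp [inv_mul_cancel₀ hθi]
      have hsub2 : resid H θ₂ ⊆ I' := by
        intro k hk
        simp only [resid, Finset.mem_filter, Finset.mem_univ, true_and, hmul2] at hk
        apply hθsupp
        simp only [resid, Finset.mem_filter, Finset.mem_univ, true_and]
        intro hc; apply hk; simp [hc]
      have := hopt θ₂ hfeas2
      have hlt : (resid H θ₂).card < (resid H θs).card :=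
        lt_of_le_of_lt (Finset.card_le_card hsub2) (Finset.card_lt_card hsub)
      omega
  · -- (d)
    intro J hiJ hrank hmin
    have hn : n ≠ 0 := by
      intro h0
      apply hθsne
      apply (hobs θs).mpr
      subst h0
      exact ⟨0, funext fun l => l.elim0⟩
    obtain ⟨j₀⟩ : Nonempty (Fin n) := ⟨⟨0, Nat.pos_of_ne_zero hn⟩⟩
    obtain ⟨θ, hθne, hθsupp⟩ := defToVec H hobs J j₀ (hrank j₀)
    by_cases hθi : H.mulVec θ i = 0
    · exfalso
      have hiresid : i ∉ resid H θ := by simp [resid, hθi]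
      have hss : resid H θ ⊂ J :=
        ⟨hθsupp, fun hJsub => hiresid (hJsub hiJ)⟩
      exact hmin _ hss ⟨j₀, vecToDef H hone _ θ hθne (fun x hx => hx) j₀⟩
    · set θ₂ : Fin n → ℝ := (H.mulVec θ i)⁻¹ • θ with hθ₂
      have hmul2 : H.mulVec θ₂ = (H.mulVec θ i)⁻¹ • H.mulVec θ := by
        rw [hθ₂, Matrix.mulVec_smul]
      have hfeas2 : H.mulVec θ₂ i = 1 := by
        rw [hmul2]; simp [inv_mul_cancel₀ hθi]
      have hsub2 : resid H θ₂ ⊆ J := by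
        intro k hk
        simp only [resid, Finset.mem_filter, Finset.mem_univ, true_and, hmul2] at hk
        apply hθsupp
        simp only [resid, Finset.mem_filter, Finset.mem_univ, true_and]
        intro hc; apply hk; simp [hc]
      exact le_trans (hopt θ₂ hfeas2) (Finset.card_le_card hsub2)
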